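/- arXiv:2012.00292 — 7 statements merged into one kernel-verified Lean document; each statement's English description precedes it below -/
import Mathlib

section
/- Let x be a feasible half-integral solution to the Held–Karp LP on a finite vertex set V (i.e., x assigns values in {0, 1/2, 1} to edges, every vertex has x-degree exactly 2, and every nonempty proper subset S of V satisfies x(δ(S)) ≥ 2). If H and T₁,…,T_t (t odd) form a comb (the T_i pairwise disjoint, each T_i meets both H and its complement) whose comb inequality x(δ(H)) + Σᵢ x(δ(Tᵢ)) ≥ 3t+1 is violated by x, then x(δ(Tᵢ)) ≥ 2 for all i implies Σᵢ x(e(Aᵢ,Bᵢ)) > t − 1 + x(δ*(H)) and Σᵢ x(e(Aᵢ,Bᵢ)) < t + 1 − x(δ*(H)), where Aᵢ = Tᵢ ∩ H, Bᵢ = Tᵢ \ H, and δ*(H) is the set of edges leaving H not contained in any tooth. In particular x(δ*(H)) < 1. -/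
open Finset

variable {V : Type*} [Fintype V] [DecidableEq V]

/-- Total x-weight of edges leaving `S` (each crossing edge counted once, from inside to outside). -/
def cutVal (x : V → V → ℝ) (S : Finset V) : ℝ := ∑ i ∈ S, ∑ j ∈ Sᶜ, x i j

/-- Total x-weight of edges between disjoint sets `A` and `B`. -/
def eVal (x : V → V → ℝ) (A B : Finset V) : ℝ := ∑ i ∈ A, ∑ j ∈ B, x i j

/-- The support graph of an edge weighting. -/
def support (x : V → V → ℝ) : SimpleGraph V where
  Adj i j := i ≠ j ∧ (0 < x i j ∨ 0 < x j i)
  symm := ⟨fun i j h => ⟨h.1.symm, h.2.symm⟩⟩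
  loopless := ⟨fun i h => h.1 rfl⟩

/-- The weight-1/2 edges of `x` decompose into the edge-disjoint triangles `𝒯`. -/
def TriDecomp (x : V → V → ℝ) (𝒯 : Finset (Finset V)) : Prop :=
  (∀ tr ∈ 𝒯, tr.card = 3) ∧
  (∀ tr ∈ 𝒯, ∀ i ∈ tr, ∀ j ∈ tr, i ≠ j → x i j = 1 / 2) ∧
  (∀ i j : V, i ≠ j → x i j = 1 / 2 → ∃! tr, tr ∈ 𝒯 ∧ i ∈ tr ∧ j ∈ tr)


lemma cut_union' (x : V → V → ℝ) (hsym : ∀ i j, x i j = x j i) (A B : Finset V)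
    (h : Disjoint A B) :
    cutVal x A + cutVal x B = cutVal x (A ∪ B) + 2 * eVal x A B := by
  have hA : Aᶜ = (A ∪ B)ᶜ ∪ B := by
    ext v
    simp only [Finset.mem_compl, Finset.mem_union, not_or]
    constructor
    · intro hv
      by_cases hb : v ∈ B
      · exact Or.inr hb
      · exact Or.inl ⟨hv, hb⟩
    · rintro (⟨hv, _⟩ | hv)
      · exact hv
      · exact fun ha => (Finset.disjoint_left.mp h ha) hv
  have hB : Bᶜ = (A ∪ B)ᶜ ∪ A := by
    ext v
    simp only [Finset.mem_compl, Finset.mem_union, not_or]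
    constructor
    · intro hv
      by_cases ha : v ∈ A
      · exact Or.inr ha
      · exact Or.inl ⟨ha, hv⟩
    · rintro (⟨_, hv⟩ | hv)
      · exact hv
      · exact fun hb => (Finset.disjoint_left.mp h hv) hb
  have hdA : Disjoint ((A ∪ B)ᶜ) B :=
    disjoint_compl_left.mono_right Finset.subset_union_right
  have hdB : Disjoint ((A ∪ B)ᶜ) A :=
    disjoint_compl_left.mono_right Finset.subset_union_left
  have hBA : eVal x B A = eVal x A B := by
    unfold eVal
    rw [Finset.sum_comm]
    exact Finset.sum_congr rfl fun i _ => Finset.sum_congr rfl fun j _ => hsym j i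
  unfold cutVal eVal at *
  rw [hA, hB, Finset.sum_union h]
  simp only [Finset.sum_union hdA, Finset.sum_union hdB, Finset.sum_add_distrib]
  linarith [hBA]

/-- Structural bounds for a violated comb inequality (half-integral Held–Karp solution). -/
theorem comb_violation_bounds
    (x : V → V → ℝ)
    (hsym : ∀ i j, x i j = x j i)
    (hdiag : ∀ i, x i i = 0)
    (hval : ∀ i j, x i j = 0 ∨ x i j = 1 / 2 ∨ x i j = 1)
    (hdeg : ∀ i : V, ∑ j, x i j = 2)
    (hsub : ∀ S : Finset V, S.Nonempty → S ≠ Finset.univ → 2 ≤ cutVal x S)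
    (H : Finset V) (t : ℕ) (ht : Odd t) (T : Fin t → Finset V)
    (hdisj : ∀ i j, i ≠ j → Disjoint (T i) (T j))
    (hteeth : ∀ i, ((T i) ∩ H).Nonempty ∧ ((T i) \ H).Nonempty)
    (hviol : cutVal x H + ∑ i, cutVal x (T i) < 3 * (t : ℝ) + 1)
    (hT2 : ∀ i, 2 ≤ cutVal x (T i)) :
    ((t : ℝ) - 1 + (cutVal x H - ∑ i, eVal x ((T i) ∩ H) ((T i) \ H)) <
        ∑ i, eVal x ((T i) ∩ H) ((T i) \ H)) ∧
    (∑ i, eVal x ((T i) ∩ H) ((T i) \ H) <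
        (t : ℝ) + 1 - (cutVal x H - ∑ i, eVal x ((T i) ∩ H) ((T i) \ H))) ∧
    (cutVal x H - ∑ i, eVal x ((T i) ∩ H) ((T i) \ H)) < 1 := by
  -- per-tooth inequality: 4 ≤ cutVal (T i) + 2 * eVal (A i) (B i)
  have key : ∀ i, 4 ≤ cutVal x (T i) + 2 * eVal x ((T i) ∩ H) ((T i) \ H) := by
    intro i
    obtain ⟨hAne, hBne⟩ := hteeth i
    obtain ⟨b, hb⟩ := hBne
    obtain ⟨a, ha⟩ := hAne
    have hABdisj : Disjoint ((T i) ∩ H) ((T i) \ H) := by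
      apply Finset.disjoint_left.mpr
      intro v hv hv'
      exact (Finset.mem_sdiff.mp hv').2 (Finset.mem_inter.mp hv).2
    have hAneU : (T i) ∩ H ≠ Finset.univ := by
      intro hEq
      have : b ∈ (T i) ∩ H := hEq ▸ Finset.mem_univ b
      exact (Finset.mem_sdiff.mp hb).2 (Finset.mem_inter.mp this).2
    have hBneU : (T i) \ H ≠ Finset.univ := by
      intro hEq
      have : a ∈ (T i) \ H := hEq ▸ Finset.mem_univ a
      exact (Finset.mem_sdiff.mp this).2 (Finset.mem_inter.mp ha).2
    have h1 := hsub _ ⟨a, ha⟩ hAneU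
    have h2 := hsub _ ⟨b, hb⟩ hBneU
    have hunion : ((T i) ∩ H) ∪ ((T i) \ H) = T i := by
      ext v
      simp only [Finset.mem_union, Finset.mem_inter, Finset.mem_sdiff]
      tauto
    have := cut_union' x hsym ((T i) ∩ H) ((T i) \ H) hABdisj
    rw [hunion] at this
    linarith
  have hsum : 4 * (t : ℝ) ≤ (∑ i, cutVal x (T i)) +
      2 * ∑ i, eVal x ((T i) ∩ H) ((T i) \ H) := by
    have := Finset.sum_le_sum (fun i (_ : i ∈ Finset.univ) => key i)
    simp only [Finset.sum_add_distrib, Finset.sum_const, Finset.card_univ,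
      Fintype.card_fin, nsmul_eq_mul, ← Finset.mul_sum] at this
    linarith
  have h2t : 2 * (t : ℝ) ≤ ∑ i, cutVal x (T i) := by
    have := Finset.sum_le_sum (fun i (_ : i ∈ Finset.univ) => hT2 i)
    simpa [Finset.sum_const, Finset.card_univ, nsmul_eq_mul, mul_comm] using this
  refine ⟨by linarith, by linarith, by linarith⟩
end

section
/- Let x be a feasible half-integral Held–Karp solution whose weight-1/2 edges form a graph that decomposes into edge-disjoint triangles. Then for every subset S of vertices, x(δ(S)) is an integer. -/
open Finset

variable {V : Type*} [Fintype V] [DecidableEq V]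

/-- If the half-edges of a half-integral Held–Karp solution decompose into edge-disjoint
triangles, then every cut value is an integer. -/
theorem cut_integrality
    (x : V → V → ℝ)
    (hsym : ∀ i j, x i j = x j i)
    (hdiag : ∀ i, x i i = 0)
    (hval : ∀ i j, x i j = 0 ∨ x i j = 1 / 2 ∨ x i j = 1)
    (hdeg : ∀ i : V, ∑ j, x i j = 2)
    (hsub : ∀ S : Finset V, S.Nonempty → S ≠ Finset.univ → 2 ≤ cutVal x S)
    (𝒯 : Finset (Finset V)) (htri : TriDecomp x 𝒯)
    (S : Finset V) :
    ∃ k : ℤ, cutVal x S = (k : ℝ) := by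
  classical
  obtain ⟨h3, hhalf, huniq⟩ := htri
  set P : Finset (V × V) := S ×ˢ Sᶜ with hP
  have hcut : cutVal x S = ∑ p ∈ P, x p.1 p.2 := by
    simp [cutVal, hP, Finset.sum_product]
  set F := P.filter (fun p => x p.1 p.2 = 1/2) with hF
  set G := P.filter (fun p => ¬ x p.1 p.2 = 1/2) with hG
  have hsplit : ∑ p ∈ P, x p.1 p.2 = ∑ p ∈ F, x p.1 p.2 + ∑ p ∈ G, x p.1 p.2 :=
    (Finset.sum_filter_add_sum_filter_not P _ _).symm
  have hFsum : ∑ p ∈ F, x p.1 p.2 = (F.card : ℝ) * (1/2) := by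
    rw [Finset.sum_congr rfl (fun p hp => (Finset.mem_filter.mp hp).2),
      Finset.sum_const, nsmul_eq_mul]
  set n1 := (G.filter (fun p => x p.1 p.2 = 1)).card with hn1
  have hGsum : ∑ p ∈ G, x p.1 p.2 = (n1 : ℝ) := by
    rw [← Finset.sum_filter_add_sum_filter_not G (fun p => x p.1 p.2 = 1)]
    have h0 : ∑ p ∈ G.filter (fun p => ¬ x p.1 p.2 = 1), x p.1 p.2 = 0 := by
      apply Finset.sum_eq_zero
      intro p hp
      rcases hval p.1 p.2 with h|h|h
      · exact h
      · exact absurd h (Finset.mem_filter.mp (Finset.mem_filter.mp hp).1).2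
      · exact absurd h (Finset.mem_filter.mp hp).2
    rw [h0, add_zero, Finset.sum_congr rfl (fun p hp => (Finset.mem_filter.mp hp).2)]
    simp [hn1]
  -- the triangle containing a half-edge
  set f : V × V → Finset V := fun p =>
    if h : p.1 ≠ p.2 ∧ x p.1 p.2 = 1/2 then (huniq p.1 p.2 h.1 h.2).choose else ∅ with hf
  have hmemF : ∀ p ∈ F, p.1 ∈ S ∧ p.2 ∈ Sᶜ ∧ x p.1 p.2 = 1/2 := by
    intro p hp
    obtain ⟨hp1, hp2⟩ := Finset.mem_filter.mp hp
    obtain ⟨h1, h2⟩ := Finset.mem_product.mp hp1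
    exact ⟨h1, h2, hp2⟩
  have hneF : ∀ p ∈ F, p.1 ≠ p.2 := by
    intro p hp
    obtain ⟨h1, h2, _⟩ := hmemF p hp
    intro he
    exact (Finset.mem_compl.mp h2) (he ▸ h1)
  have hfspec : ∀ p ∈ F, f p ∈ 𝒯 ∧ p.1 ∈ f p ∧ p.2 ∈ f p := by
    intro p hp
    obtain ⟨_, _, hx⟩ := hmemF p hp
    have hne := hneF p hp
    simp only [hf, dif_pos (And.intro hne hx)]
    exact (huniq p.1 p.2 hne hx).choose_spec.1
  have hcard : F.card = ∑ tr ∈ 𝒯, (F.filter (fun p => f p = tr)).card :=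
    Finset.card_eq_sum_card_fiberwise (fun p hp => (hfspec p hp).1)
  have hfiber : ∀ tr ∈ 𝒯, F.filter (fun p => f p = tr) = (tr ∩ S) ×ˢ (tr ∩ Sᶜ) := by
    intro tr htr
    ext p
    constructor
    · intro hp
      obtain ⟨hpF, hfp⟩ := Finset.mem_filter.mp hp
      obtain ⟨h1, h2, _⟩ := hmemF p hpF
      obtain ⟨_, hm1, hm2⟩ := hfspec p hpF
      exact Finset.mem_product.mpr ⟨Finset.mem_inter.mpr ⟨hfp ▸ hm1, h1⟩,
        Finset.mem_inter.mpr ⟨hfp ▸ hm2, h2⟩⟩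
    · intro hp
      obtain ⟨hq1, hq2⟩ := Finset.mem_product.mp hp
      obtain ⟨ht1, hs1⟩ := Finset.mem_inter.mp hq1
      obtain ⟨ht2, hs2⟩ := Finset.mem_inter.mp hq2
      have hne : p.1 ≠ p.2 := fun he => (Finset.mem_compl.mp hs2) (he ▸ hs1)
      have hx : x p.1 p.2 = 1/2 := hhalf tr htr p.1 ht1 p.2 ht2 hne
      have hpF : p ∈ F := Finset.mem_filter.mpr
        ⟨Finset.mem_product.mpr ⟨hs1, hs2⟩, hx⟩
      refine Finset.mem_filter.mpr ⟨hpF, ?_⟩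
      simp only [hf, dif_pos (And.intro hne hx)]
      exact ((huniq p.1 p.2 hne hx).choose_spec.2 tr ⟨htr, ht1, ht2⟩).symm
  have heven : Even F.card := by
    rw [hcard]
    refine Finset.sum_induction _ Even (fun a b ha hb => ha.add hb) Even.zero ?_
    intro tr htr
    rw [hfiber tr htr, Finset.card_product]
    have hsum3 : (tr ∩ S).card + (tr ∩ Sᶜ).card = 3 := by
      rw [← h3 tr htr, ← Finset.card_union_of_disjoint]
      · congr 1
        rw [← Finset.inter_union_distrib_left, Finset.union_compl, Finset.inter_univ]
      · exact Finset.disjoint_left.mpr (fun a ha hb =>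
          (Finset.mem_compl.mp (Finset.mem_inter.mp hb).2) (Finset.mem_inter.mp ha).2)
    rw [Nat.even_mul, Nat.even_iff, Nat.even_iff]
    omega
  obtain ⟨m, hm⟩ := heven
  refine ⟨(n1 : ℤ) + m, ?_⟩
  rw [hcut, hsplit, hFsum, hGsum, hm]
  push_cast
  ring
end

section
/- Let x be a feasible half-integral Held–Karp solution. If a comb with teeth T₁,…,T_t is violated by x, then for every tooth Tᵢ, the support graph of x restricted to Tᵢ is connected (i.e., the graph on Tᵢ whose edges are those e ⊆ Tᵢ with x(e) > 0 is connected). -/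
open Finset

variable {V : Type*} [Fintype V] [DecidableEq V]

set_option linter.unusedSectionVars false in
lemma eVal_nonneg (x : V → V → ℝ) (hr : ∀ i j, 0 ≤ x i j) (A B : Finset V) :
    0 ≤ eVal x A B :=
  Finset.sum_nonneg fun i _ => Finset.sum_nonneg fun j _ => hr i j

set_option linter.unusedSectionVars false in
lemma eVal_symm (x : V → V → ℝ) (hsym : ∀ i j, x i j = x j i) (A B : Finset V) :
    eVal x B A = eVal x A B := by
  unfold eVal
  rw [Finset.sum_comm]
  exact Finset.sum_congr rfl fun a _ => Finset.sum_congr rfl fun b _ => hsym b a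

lemma cutVal_union (x : V → V → ℝ) (A B : Finset V) (hAB : Disjoint A B) :
    cutVal x (A ∪ B) = cutVal x A + cutVal x B - eVal x A B - eVal x B A := by
  have hcompl : Aᶜ = (A ∪ B)ᶜ ∪ B := by
    ext w
    simp only [Finset.mem_compl, Finset.mem_union]
    constructor
    · intro hw
      by_cases hb : w ∈ B
      · exact Or.inr hb
      · exact Or.inl (by push_neg; exact ⟨hw, hb⟩)
    · rintro (hw | hw)
      · exact fun h => hw (Or.inl h)
      · exact fun h => (Finset.disjoint_left.mp hAB h) hw
  have hcomplB : Bᶜ = (A ∪ B)ᶜ ∪ A := by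
    ext w
    simp only [Finset.mem_compl, Finset.mem_union]
    constructor
    · intro hw
      by_cases ha : w ∈ A
      · exact Or.inr ha
      · exact Or.inl (by push_neg; exact ⟨ha, hw⟩)
    · rintro (hw | hw)
      · exact fun h => hw (Or.inr h)
      · exact fun h => (Finset.disjoint_right.mp hAB h) hw
  have hd1 : Disjoint ((A ∪ B)ᶜ) B :=
    Finset.disjoint_left.mpr fun w hw hb =>
      (Finset.mem_compl.mp hw) (Finset.mem_union.mpr (Or.inr hb))
  have hd2 : Disjoint ((A ∪ B)ᶜ) A :=
    Finset.disjoint_left.mpr fun w hw ha =>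
      (Finset.mem_compl.mp hw) (Finset.mem_union.mpr (Or.inl ha))
  have hA : cutVal x A = (∑ i ∈ A, ∑ j ∈ (A ∪ B)ᶜ, x i j) + eVal x A B := by
    unfold cutVal eVal
    rw [← Finset.sum_add_distrib]
    refine Finset.sum_congr rfl fun i _ => ?_
    rw [hcompl, Finset.sum_union hd1]
  have hB : cutVal x B = (∑ i ∈ B, ∑ j ∈ (A ∪ B)ᶜ, x i j) + eVal x B A := by
    unfold cutVal eVal
    rw [← Finset.sum_add_distrib]
    refine Finset.sum_congr rfl fun i _ => ?_
    rw [hcomplB, Finset.sum_union hd2]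
  have hU : cutVal x (A ∪ B)
      = (∑ i ∈ A, ∑ j ∈ (A ∪ B)ᶜ, x i j) + (∑ i ∈ B, ∑ j ∈ (A ∪ B)ᶜ, x i j) := by
    unfold cutVal
    rw [Finset.sum_union hAB]
  rw [hA, hB, hU]; ring


/-- In a comb violated by a feasible Held–Karp solution, the support graph restricted to any
tooth is connected. -/
theorem violated_comb_teeth_connected
    (x : V → V → ℝ)
    (hsym : ∀ i j, x i j = x j i)
    (hdiag : ∀ i, x i i = 0)
    (hrange : ∀ i j, 0 ≤ x i j ∧ x i j ≤ 1)
    (hdeg : ∀ i : V, ∑ j, x i j = 2)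
    (hsub : ∀ S : Finset V, S.Nonempty → S ≠ Finset.univ → 2 ≤ cutVal x S)
    (H : Finset V) (t : ℕ) (ht : Odd t) (T : Fin t → Finset V)
    (hdisj : ∀ i j, i ≠ j → Disjoint (T i) (T j))
    (hteeth : ∀ i, ((T i) ∩ H).Nonempty ∧ ((T i) \ H).Nonempty)
    (hviol : cutVal x H + ∑ i, cutVal x (T i) < 3 * (t : ℝ) + 1) :
    ∀ i, ((support x).induce ((T i : Finset V) : Set V)).Connected := by
  classical
  intro i0
  obtain ⟨u0, hu0⟩ := (hteeth i0).1
  have hu0T : u0 ∈ T i0 := (Finset.mem_inter.mp hu0).1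
  haveI hNE : Nonempty (↑(T i0) : Set V) := ⟨⟨u0, by simpa using hu0T⟩⟩
  -- it suffices to prove preconnectedness
  refine SimpleGraph.Connected.mk ?_
  intro u v
  by_contra hreach
  set G' := (support x).induce ((T i0 : Finset V) : Set V) with hG'
  -- the reachable-from-u part of the tooth
  set S : Finset V :=
    (T i0).filter (fun w => ∃ hw : w ∈ (T i0 : Finset V), G'.Reachable u ⟨w, by simpa using hw⟩)
    with hSdef
  have hS_sub : S ⊆ T i0 := Finset.filter_subset _ _
  have huT : (u : V) ∈ T i0 := by
    have := u.2; simpa using this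
  have hvT : (v : V) ∈ T i0 := by
    have := v.2; simpa using this
  have huS : (u : V) ∈ S := by
    rw [hSdef, Finset.mem_filter]
    exact ⟨huT, huT, SimpleGraph.Reachable.refl u⟩
  have hvS : (v : V) ∉ S := by
    rw [hSdef, Finset.mem_filter]
    rintro ⟨-, hw, hr⟩
    exact hreach hr
  set B : Finset V := T i0 \ S with hBdef
  have hvB : (v : V) ∈ B := Finset.mem_sdiff.mpr ⟨hvT, hvS⟩
  have huB : (u : V) ∉ B := fun h => (Finset.mem_sdiff.mp h).2 huS
  have hzero : ∀ a ∈ S, ∀ b ∈ B, x a b = 0 := by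
    intro a ha b hb
    by_contra hx
    have hpos : 0 < x a b := lt_of_le_of_ne (hrange a b).1 (Ne.symm hx)
    obtain ⟨haT, hw, hra⟩ := Finset.mem_filter.mp ha
    obtain ⟨hbT, hbS⟩ := Finset.mem_sdiff.mp hb
    have hab : a ≠ b := by
      rintro rfl; exact hbS ha
    have hadj : G'.Adj ⟨a, by simpa using haT⟩ ⟨b, by simpa using hbT⟩ :=
      (show a ≠ b ∧ (0 < x a b ∨ 0 < x b a) from ⟨hab, Or.inl hpos⟩)
    have hrb : G'.Reachable u ⟨b, by simpa using hbT⟩ :=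
      hra.trans hadj.reachable
    exact hbS (Finset.mem_filter.mpr ⟨hbT, hbT, hrb⟩)
  have heAB : eVal x S B = 0 :=
    Finset.sum_eq_zero fun a ha => Finset.sum_eq_zero fun b hb => hzero a ha b hb
  have heBA : eVal x B S = 0 :=
    Finset.sum_eq_zero fun b hb => Finset.sum_eq_zero fun a ha =>
      (hsym b a).trans (hzero a ha b hb)
  have hSB : Disjoint S B := Finset.disjoint_sdiff
  have hUnion : S ∪ B = T i0 := Finset.union_sdiff_of_subset hS_sub
  have hcutS : 2 ≤ cutVal x S := by
    refine hsub S ⟨u, huS⟩ fun h => hvS ?_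
    rw [h]; exact Finset.mem_univ _
  have hcutB : 2 ≤ cutVal x B := by
    refine hsub B ⟨v, hvB⟩ fun h => huB ?_
    rw [h]; exact Finset.mem_univ _
  have cut4 : 4 ≤ cutVal x (T i0) := by
    have := cutVal_union x S B hSB
    rw [hUnion] at this
    rw [this, heAB, heBA]
    linarith
  -- arithmetic
  set c : Fin t → ℝ := fun j => eVal x (T j ∩ H) (T j \ H) with hc
  have hcnonneg : ∀ j, 0 ≤ c j := fun j =>
    eVal_nonneg x (fun a b => (hrange a b).1) _ _
  have hlower : ∀ j, 4 - 2 * c j ≤ cutVal x (T j) := by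
    intro j
    have hABd : Disjoint (T j ∩ H) (T j \ H) :=
      Finset.disjoint_left.mpr fun a ha hb =>
        (Finset.mem_sdiff.mp hb).2 (Finset.mem_inter.mp ha).2
    have hUj : (T j ∩ H) ∪ (T j \ H) = T j := sup_inf_sdiff (T j) H
    have hcut := cutVal_union x (T j ∩ H) (T j \ H) hABd
    rw [hUj, eVal_symm x hsym] at hcut
    obtain ⟨b, hb⟩ := (hteeth j).2
    obtain ⟨a, ha⟩ := (hteeth j).1
    have h2A : 2 ≤ cutVal x (T j ∩ H) := by
      refine hsub _ ⟨a, ha⟩ fun h => ?_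
      have : b ∈ T j ∩ H := h ▸ Finset.mem_univ b
      exact (Finset.mem_sdiff.mp hb).2 (Finset.mem_inter.mp this).2
    have h2B : 2 ≤ cutVal x (T j \ H) := by
      refine hsub _ ⟨b, hb⟩ fun h => ?_
      have : a ∈ T j \ H := h ▸ Finset.mem_univ a
      exact (Finset.mem_sdiff.mp this).2 (Finset.mem_inter.mp ha).2
    have hcj : eVal x (T j \ H) (T j ∩ H) = c j := eVal_symm x hsym _ _
    rw [hcj] at hcut
    rw [hcut]
    linarith
  have hkey : ∀ j, (if j = i0 then (4:ℝ) else 3) ≤ c j + cutVal x (T j) := by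
    intro j
    by_cases hj : j = i0
    · subst hj
      rw [if_pos rfl]
      linarith [hcnonneg j, cut4]
    · simp only [if_neg hj]
      obtain ⟨a, ha⟩ := (hteeth j).1
      have h2 : 2 ≤ cutVal x (T j) := by
        refine hsub _ ⟨a, (Finset.mem_inter.mp ha).1⟩ fun h => ?_
        have : u0 ∈ T j := h ▸ Finset.mem_univ u0
        exact Finset.disjoint_left.mp (hdisj j i0 hj) this hu0T
      linarith [hlower j]
  -- cutVal H dominates the sum of internal crossings
  have hHc : (∑ j, c j) ≤ cutVal x H := by
    have step1 : ∀ j, c j ≤ ∑ a ∈ T j ∩ H, ∑ b ∈ Hᶜ, x a b := by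
      intro j
      refine Finset.sum_le_sum fun a _ => ?_
      refine Finset.sum_le_sum_of_subset_of_nonneg ?_ fun b _ _ => (hrange a b).1
      intro b hb
      exact Finset.mem_compl.mpr (Finset.mem_sdiff.mp hb).2
    have hpd : ((Finset.univ : Finset (Fin t)) : Set (Fin t)).PairwiseDisjoint
        (fun j => T j ∩ H) := by
      intro j _ k _ hjk
      exact (hdisj j k hjk).mono Finset.inter_subset_left Finset.inter_subset_left
    have step2 : (∑ j, ∑ a ∈ T j ∩ H, ∑ b ∈ Hᶜ, x a b)
        = ∑ a ∈ Finset.univ.biUnion (fun j => T j ∩ H), ∑ b ∈ Hᶜ, x a b :=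
      (Finset.sum_biUnion hpd).symm
    have step3 : (∑ a ∈ Finset.univ.biUnion (fun j => T j ∩ H), ∑ b ∈ Hᶜ, x a b)
        ≤ ∑ a ∈ H, ∑ b ∈ Hᶜ, x a b := by
      refine Finset.sum_le_sum_of_subset_of_nonneg ?_
        (fun a _ _ => Finset.sum_nonneg fun b _ => (hrange a b).1)
      intro a ha
      obtain ⟨j, -, haj⟩ := Finset.mem_biUnion.mp ha
      exact (Finset.mem_inter.mp haj).2
    calc (∑ j, c j) ≤ ∑ j, ∑ a ∈ T j ∩ H, ∑ b ∈ Hᶜ, x a b :=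
          Finset.sum_le_sum fun j _ => step1 j
      _ = _ := step2
      _ ≤ cutVal x H := step3
  have hfinal : (3:ℝ) * t + 1 ≤ cutVal x H + ∑ j, cutVal x (T j) := by
    have h1 : (∑ j : Fin t, (if j = i0 then (4:ℝ) else 3))
        ≤ ∑ j, (c j + cutVal x (T j)) :=
      Finset.sum_le_sum fun j _ => hkey j
    have h2 : (∑ j : Fin t, (if j = i0 then (4:ℝ) else 3)) = 3 * t + 1 := by
      have : ∀ j : Fin t, (if j = i0 then (4:ℝ) else 3)
          = 3 + (if j = i0 then (1:ℝ) else 0) := by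
        intro j; split <;> norm_num
      rw [Finset.sum_congr rfl fun j _ => this j, Finset.sum_add_distrib,
        Finset.sum_const, Finset.sum_ite_eq' Finset.univ i0 (fun _ => (1:ℝ))]
      simp [Finset.card_univ, mul_comm]
    rw [Finset.sum_add_distrib] at h1
    linarith [hHc, h1, h2 ▸ h1]
  exact absurd hviol (not_lt.mpr hfinal)
end

section
/- Let x be a feasible half-integral Held–Karp solution on vertex set X, and let S ⊂ T ⊆ X with: x(e(u, T \ S)) ≤ 1 for every u ∈ S, x(δ(S)) = n, and x(δ(T)) = n − 1 for some number n. Then there exist distinct vertices u, v ∈ S and a path in the support of x from u to v all of whose internal vertices lie in T \ S. -/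
open Finset

variable {V : Type*} [Fintype V] [DecidableEq V]

/-- The support graph restricted (induced) to a finite vertex set `A`. -/
def resGraph (x : V → V → ℝ) (A : Finset V) : SimpleGraph V where
  Adj a b := (support x).Adj a b ∧ a ∈ A ∧ b ∈ A
  symm := ⟨fun a b h => ⟨h.1.symm, h.2.2, h.2.1⟩⟩
  loopless := ⟨fun a h => h.1.1 rfl⟩

lemma resGraph_le (x : V → V → ℝ) (A : Finset V) : resGraph x A ≤ support x :=
  fun _ _ h => h.1

lemma resGraph_walk_subset (x : V → V → ℝ) (A : Finset V) {a b : V}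
    (p : (resGraph x A).Walk a b) (ha : a ∈ A) : ∀ w ∈ p.support, w ∈ A := by
  induction p with
  | nil =>
    intro w hw
    simp only [SimpleGraph.Walk.support_nil, List.mem_singleton] at hw
    exact hw ▸ ha
  | cons h p ih =>
    intro w hw
    rw [SimpleGraph.Walk.support_cons] at hw
    rcases List.mem_cons.mp hw with rfl | hw
    · exact ha
    · exact ih h.2.2 w hw

/-- Vertices of `A` reachable from `u` via a first support-edge into `A` and then a walk
inside the induced graph on `A`. -/
noncomputable def reachSet (x : V → V → ℝ) (A : Finset V) (u : V) : Finset V :=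
  @Finset.filter V (fun w => ∃ t ∈ A, (support x).Adj u t ∧ (resGraph x A).Reachable t w)
    (Classical.decPred _) A

lemma mem_reachSet {x : V → V → ℝ} {A : Finset V} {u w : V} :
    w ∈ reachSet x A u ↔
      w ∈ A ∧ ∃ t ∈ A, (support x).Adj u t ∧ (resGraph x A).Reachable t w := by
  simp [reachSet]

lemma reachSet_subset (x : V → V → ℝ) (A : Finset V) (u : V) : reachSet x A u ⊆ A :=
  fun w hw => (mem_reachSet.mp hw).1

lemma reachSet_base {x : V → V → ℝ} {A : Finset V} {u w : V}
    (hw : w ∈ A) (hadj : (support x).Adj u w) : w ∈ reachSet x A u :=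
  mem_reachSet.mpr ⟨hw, w, hw, hadj, SimpleGraph.Reachable.refl w⟩

lemma reachSet_extend {x : V → V → ℝ} {A : Finset V} {u a b : V}
    (ha : a ∈ reachSet x A u) (hb : b ∈ A) (hadj : (support x).Adj a b) :
    b ∈ reachSet x A u := by
  obtain ⟨haA, t, ht, hadj', hreach⟩ := mem_reachSet.mp ha
  exact mem_reachSet.mpr ⟨hb, t, ht, hadj',
    hreach.trans (SimpleGraph.Adj.reachable (⟨hadj, haA, hb⟩ : (resGraph x A).Adj a b))⟩

lemma reachSet_walk {x : V → V → ℝ} {A : Finset V} {u w : V}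
    (hw : w ∈ reachSet x A u) :
    ∃ p : (support x).Walk u w, ∀ z ∈ p.support, z = u ∨ z ∈ A := by
  obtain ⟨hwA, t, ht, hadj, hreach⟩ := mem_reachSet.mp hw
  obtain ⟨q⟩ := hreach
  have hq : ∀ e ∈ q.edges, e ∈ (support x).edgeSet := fun e he =>
    SimpleGraph.edgeSet_mono (resGraph_le x A) (q.edges_subset_edgeSet he)
  refine ⟨SimpleGraph.Walk.cons hadj (q.transfer _ hq), ?_⟩
  intro z hz
  rw [SimpleGraph.Walk.support_cons] at hz
  rcases List.mem_cons.mp hz with rfl | hz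
  · exact Or.inl rfl
  · rw [SimpleGraph.Walk.support_transfer] at hz
    exact Or.inr (resGraph_walk_subset x A q ht z hz)

lemma cutVal_eq_sum (x : V → V → ℝ) (hdeg : ∀ i : V, ∑ j, x i j = 2) (A : Finset V) :
    cutVal x A = ∑ i ∈ A, (2 - ∑ j ∈ A, x i j) := by
  unfold cutVal
  refine Finset.sum_congr rfl fun i _ => ?_
  have h := Finset.sum_add_sum_compl A (x i)
  rw [hdeg i] at h
  linarith

lemma cutVal_nonneg (x : V → V → ℝ) (hrange : ∀ i j, 0 ≤ x i j ∧ x i j ≤ 1)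
    (A : Finset V) : 0 ≤ cutVal x A :=
  Finset.sum_nonneg fun i _ => Finset.sum_nonneg fun j _ => (hrange i j).1

/-- The cycle lemma: if $S ⊂ T$, every vertex of $S$ sends weight at most 1 into $T \setminus S$,
and $x(δ(T)) = x(δ(S)) - 1$, then two vertices of $S$ are joined by a path of the support of $x$
whose internal vertices all lie in $T \setminus S$. -/
theorem cycle_lemma
    (x : V → V → ℝ)
    (hsym : ∀ i j, x i j = x j i)
    (hdiag : ∀ i, x i i = 0)
    (hrange : ∀ i j, 0 ≤ x i j ∧ x i j ≤ 1)
    (hdeg : ∀ i : V, ∑ j, x i j = 2)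
    (hsub : ∀ A : Finset V, A.Nonempty → A ≠ Finset.univ → 2 ≤ cutVal x A)
    (S T : Finset V) (hST : S ⊂ T)
    (hout : ∀ u ∈ S, eVal x {u} (T \ S) ≤ 1)
    (n : ℝ) (hS : cutVal x S = n) (hT : cutVal x T = n - 1) :
    ∃ u ∈ S, ∃ v ∈ S, u ≠ v ∧
      ∃ p : (support x).Walk u v, p.IsPath ∧
        ∀ w ∈ p.support, w ≠ u → w ≠ v → w ∈ T \ S := by
  classical
  by_contra hcon
  -- No walk between distinct vertices of S with internal vertices in T \ S.
  have noWalk : ∀ u ∈ S, ∀ v ∈ S, u ≠ v → ∀ p : (support x).Walk u v,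
      (∀ z ∈ p.support, z = u ∨ z = v ∨ z ∈ T \ S) → False := by
    intro u hu v hv huv p hp
    apply hcon
    refine ⟨u, hu, v, hv, huv, ↑p.toPath, p.toPath.2, ?_⟩
    intro w hw hwu hwv
    rcases hp w (p.support_toPath_subset hw) with h | h | h
    · exact absurd h hwu
    · exact absurd h hwv
    · exact h
  set A : Finset V := T \ S with hA
  set P : V → Finset V := fun u => reachSet x A u with hP
  -- F1 : no weight between vertices of S
  have F1 : ∀ u ∈ S, ∀ v ∈ S, x u v = 0 := by
    intro u hu v hv
    by_cases huv : u = v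
    · exact huv ▸ hdiag u
    by_contra hx
    have hadj : (support x).Adj u v :=
      ⟨huv, Or.inl (lt_of_le_of_ne (hrange u v).1 (Ne.symm hx))⟩
    refine noWalk u hu v hv huv (SimpleGraph.Walk.cons hadj SimpleGraph.Walk.nil) ?_
    intro z hz
    simp only [SimpleGraph.Walk.support_cons, SimpleGraph.Walk.support_nil,
      List.mem_cons, List.mem_singleton] at hz
    rcases hz with rfl | rfl | h
    · exact Or.inl rfl
    · exact Or.inr (Or.inl rfl)
    · exact absurd h List.not_mem_nil
  -- F4 : the reach sets of distinct vertices of S are disjoint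
  have F4 : ∀ u ∈ S, ∀ v ∈ S, u ≠ v → ∀ w, w ∈ P u → w ∈ P v → False := by
    intro u hu v hv huv w h1 h2
    obtain ⟨p1, hp1⟩ := reachSet_walk (x := x) (A := A) h1
    obtain ⟨p2, hp2⟩ := reachSet_walk (x := x) (A := A) h2
    refine noWalk u hu v hv huv (p1.append p2.reverse) ?_
    intro z hz
    rw [SimpleGraph.Walk.support_append] at hz
    rcases List.mem_append.mp hz with hz | hz
    · rcases hp1 z hz with h | h
      · exact Or.inl h
      · exact Or.inr (Or.inr h)
    · have hz' : z ∈ p2.support := by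
        have := List.mem_of_mem_tail hz
        rwa [SimpleGraph.Walk.support_reverse, List.mem_reverse] at this
      rcases hp2 z hz' with h | h
      · exact Or.inr (Or.inl h)
      · exact Or.inr (Or.inr h)
  -- F2 : no weight from u ∈ S to unreachable vertices of T \ S
  have F2 : ∀ u ∈ S, ∀ w ∈ A, w ∉ P u → x u w = 0 := by
    intro u hu w hw hnr
    by_contra hx
    have hne : u ≠ w := fun h => (Finset.mem_sdiff.mp hw).2 (h ▸ hu)
    have hadj : (support x).Adj u w :=
      ⟨hne, Or.inl (lt_of_le_of_ne (hrange u w).1 (Ne.symm hx))⟩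
    exact hnr (reachSet_base hw hadj)
  -- F3 : no weight from a reachable vertex to an unreachable vertex of T \ S
  have F3 : ∀ u : V, ∀ a ∈ P u, ∀ b ∈ A, b ∉ P u → x a b = 0 := by
    intro u a ha b hb hnr
    by_contra hx
    have hab : a ≠ b := fun h => hnr (h ▸ ha)
    have hadj : (support x).Adj a b :=
      ⟨hab, Or.inl (lt_of_le_of_ne (hrange a b).1 (Ne.symm hx))⟩
    exact hnr (reachSet_extend ha hb hadj)
  -- the blobs
  set B : V → Finset V := fun u => insert u (P u) with hB
  have hPsub : ∀ u, P u ⊆ A := fun u => reachSet_subset x A u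
  have hBsub : ∀ u ∈ S, B u ⊆ T := by
    intro u hu
    refine Finset.insert_subset (hST.subset hu) ((hPsub u).trans ?_)
    exact Finset.sdiff_subset
  have hSBU : S.biUnion B ⊆ T := by
    intro a ha
    obtain ⟨u, hu, hau⟩ := Finset.mem_biUnion.mp ha
    exact hBsub u hu hau
  have hBdisj : (↑S : Set V).PairwiseDisjoint B := by
    intro u hu v hv huv
    simp only [Function.onFun]
    rw [Finset.disjoint_left]
    intro a hau hav
    rcases Finset.mem_insert.mp hau with rfl | haPu
    · rcases Finset.mem_insert.mp hav with h | h
      · exact huv h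
      · exact (Finset.mem_sdiff.mp (hPsub v h)).2 hu
    · rcases Finset.mem_insert.mp hav with rfl | haPv
      · exact (Finset.mem_sdiff.mp (hPsub u haPu)).2 hv
      · exact F4 u hu v hv huv a haPu haPv
  set Tstar : Finset V := T \ S.biUnion B with hTstar
  -- the cross-weights vanish
  have crossZero : ∀ u ∈ S, ∀ i ∈ B u, ∀ j ∈ T, j ∉ B u → x i j = 0 := by
    intro u hu i hi j hjT hjB
    rcases Finset.mem_insert.mp hi with rfl | hiP
    · by_cases hjS : j ∈ S
      · exact F1 i hu j hjS
      · exact F2 i hu j (Finset.mem_sdiff.mpr ⟨hjT, hjS⟩)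
          (fun h => hjB (Finset.mem_insert_of_mem h))
    · by_cases hjS : j ∈ S
      · have hju : j ≠ u := fun h => hjB (h ▸ Finset.mem_insert_self u (P u))
        have hiA : i ∈ A := hPsub u hiP
        have hinotPj : i ∉ P j := fun h => F4 u hu j hjS (fun he => hju he.symm) i hiP h
        rw [hsym]
        exact F2 j hjS i hiA hinotPj
      · have hjA : j ∈ A := Finset.mem_sdiff.mpr ⟨hjT, hjS⟩
        exact F3 u i hiP j hjA (fun h => hjB (Finset.mem_insert_of_mem h))
  have starZero : ∀ i ∈ Tstar, ∀ j ∈ T, j ∉ Tstar → x i j = 0 := by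
    intro i hi j hjT hjS'
    obtain ⟨hiT, hiB⟩ := Finset.mem_sdiff.mp hi
    have hiS : i ∉ S := fun h =>
      hiB (Finset.mem_biUnion.mpr ⟨i, h, Finset.mem_insert_self _ _⟩)
    have hiA : i ∈ A := Finset.mem_sdiff.mpr ⟨hiT, hiS⟩
    have hiP : ∀ v ∈ S, i ∉ P v := fun v hv h =>
      hiB (Finset.mem_biUnion.mpr ⟨v, hv, Finset.mem_insert_of_mem h⟩)
    have hjB : j ∈ S.biUnion B := by
      by_contra h
      exact hjS' (Finset.mem_sdiff.mpr ⟨hjT, h⟩)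
    obtain ⟨v, hv, hjBv⟩ := Finset.mem_biUnion.mp hjB
    rcases Finset.mem_insert.mp hjBv with rfl | hjP
    · rw [hsym]
      exact F2 j hv i hiA (hiP j hv)
    · rw [hsym]
      exact F3 v j hjP i hiA (hiP v hv)
  -- restricted row sums
  have rowB : ∀ u ∈ S, ∀ i ∈ B u, ∑ j ∈ B u, x i j = ∑ j ∈ T, x i j := by
    intro u hu i hi
    exact Finset.sum_subset (hBsub u hu) (fun j hjT hjB => crossZero u hu i hi j hjT hjB)
  have rowStar : ∀ i ∈ Tstar, ∑ j ∈ Tstar, x i j = ∑ j ∈ T, x i j := by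
    intro i hi
    exact Finset.sum_subset Finset.sdiff_subset (starZero i hi)
  -- decomposition of the cut of T
  have hTdecomp : cutVal x T = ∑ u ∈ S, cutVal x (B u) + cutVal x Tstar := by
    rw [cutVal_eq_sum x hdeg T]
    have hsplit : ∑ i ∈ T, (2 - ∑ j ∈ T, x i j)
        = ∑ i ∈ S.biUnion B, (2 - ∑ j ∈ T, x i j)
          + ∑ i ∈ Tstar, (2 - ∑ j ∈ T, x i j) := by
      rw [add_comm]
      exact (Finset.sum_sdiff hSBU).symm
    rw [hsplit]
    congr 1
    · rw [Finset.sum_biUnion hBdisj]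
      refine Finset.sum_congr rfl fun u hu => ?_
      rw [cutVal_eq_sum x hdeg (B u)]
      refine Finset.sum_congr rfl fun i hi => ?_
      rw [rowB u hu i hi]
    · rw [cutVal_eq_sum x hdeg Tstar]
      refine Finset.sum_congr rfl fun i hi => ?_
      rw [rowStar i hi]
  -- each blob has cut at least 2
  have hBge : ∀ u ∈ S, (2:ℝ) ≤ cutVal x (B u) := by
    intro u hu
    have huP : u ∉ P u := fun h => (Finset.mem_sdiff.mp (hPsub u h)).2 hu
    rcases (P u).eq_empty_or_nonempty with he | hne
    · have : B u = {u} := by rw [hB]; simp [he]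
      rw [this, cutVal_eq_sum x hdeg]
      simp [hdiag u]
    · have hPuniv : P u ≠ Finset.univ := fun h => huP (h ▸ Finset.mem_univ u)
      have hPcut : 2 ≤ cutVal x (P u) := hsub (P u) hne hPuniv
      have hexp : cutVal x (B u)
          = (2 - x u u - ∑ j ∈ P u, x u j)
            + ∑ i ∈ P u, (2 - x i u - ∑ j ∈ P u, x i j) := by
        rw [hB]
        rw [cutVal_eq_sum x hdeg, Finset.sum_insert huP]
        congr 1
        · rw [Finset.sum_insert huP]; ring
        · refine Finset.sum_congr rfl fun i _ => ?_
          rw [Finset.sum_insert huP]; ring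
      have hPc : cutVal x (P u) = ∑ i ∈ P u, (2 - ∑ j ∈ P u, x i j) :=
        cutVal_eq_sum x hdeg (P u)
      have hswap : ∑ i ∈ P u, x i u = ∑ j ∈ P u, x u j :=
        Finset.sum_congr rfl (fun i _ => (hsym i u).symm ▸ (hsym i u))
      have hle1 : ∑ j ∈ P u, x u j ≤ 1 := by
        have h2 : ∑ j ∈ P u, x u j ≤ ∑ j ∈ A, x u j :=
          Finset.sum_le_sum_of_subset_of_nonneg (hPsub u)
            (fun j _ _ => (hrange u j).1)
        have h3 : eVal x {u} A = ∑ j ∈ A, x u j := by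
          simp [eVal]
        have h4 := hout u hu
        rw [h3] at h4
        linarith
      have hmid : ∑ i ∈ P u, (2 - x i u - ∑ j ∈ P u, x i j)
          = cutVal x (P u) - ∑ i ∈ P u, x i u := by
        rw [hPc]
        calc ∑ i ∈ P u, (2 - x i u - ∑ j ∈ P u, x i j)
            = ∑ i ∈ P u, ((2 - ∑ j ∈ P u, x i j) - x i u) :=
              Finset.sum_congr rfl (fun i _ => by ring)
          _ = (∑ i ∈ P u, (2 - ∑ j ∈ P u, x i j)) - ∑ i ∈ P u, x i u :=
              Finset.sum_sub_distrib (fun i => 2 - ∑ j ∈ P u, x i j) (fun i => x i u)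
      rw [hexp, hmid, hswap, hdiag u]
      linarith
  -- cut of S equals 2 |S|
  have hSval : cutVal x S = 2 * S.card := by
    rw [cutVal_eq_sum x hdeg]
    have : ∀ i ∈ S, (2 - ∑ j ∈ S, x i j) = 2 := by
      intro i hi
      rw [Finset.sum_eq_zero (fun j hj => F1 i hi j hj)]
      ring
    rw [Finset.sum_congr rfl this, Finset.sum_const]
    simp [mul_comm]
  have h1 : (2:ℝ) * S.card ≤ ∑ u ∈ S, cutVal x (B u) := by
    calc (2:ℝ) * S.card = ∑ _u ∈ S, (2:ℝ) := by
          rw [Finset.sum_const]; simp [mul_comm]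
      _ ≤ _ := Finset.sum_le_sum hBge
  have h0 : 0 ≤ cutVal x Tstar := cutVal_nonneg x hrange Tstar
  rw [hSval] at hS
  linarith [hTdecomp, hT]
end

section
/- Let x be a feasible half-integral Held–Karp solution whose weight-1/2 edges decompose into edge-disjoint triangles, and let C be a comb violated by x with handle H and teeth T₁,…,T_t. If there is exactly one edge of weight 1/2 between A₁ = T₁ ∩ H and B₁ = T₁ \ H and no other x-weight between A₁ and B₁ (so x(e(A₁,B₁)) = 1/2), then the third vertex of the triangle containing that half-edge lies outside T₁, and consequently x(δ*(H)) ≥ 1/2. -/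
open Finset

variable {V : Type*} [Fintype V] [DecidableEq V]

/-- If exactly one half-edge (and nothing else) crosses from `A₁ = T₁ ∩ H` to `B₁ = T₁ \ H`
in a violated comb, then the third vertex of its triangle lies outside `T₁`, and the weight
of edges leaving `H` not inside any tooth is at least 1/2. -/
theorem half_edge_triangle_escapes
    (x : V → V → ℝ)
    (hsym : ∀ i j, x i j = x j i)
    (hdiag : ∀ i, x i i = 0)
    (hval : ∀ i j, x i j = 0 ∨ x i j = 1 / 2 ∨ x i j = 1)
    (hdeg : ∀ i : V, ∑ j, x i j = 2)
    (hsub : ∀ S : Finset V, S.Nonempty → S ≠ Finset.univ → 2 ≤ cutVal x S)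
    (𝒯 : Finset (Finset V)) (htri : TriDecomp x 𝒯)
    (H : Finset V) (t : ℕ) (ht : Odd t) (T : Fin t → Finset V)
    (hdisj : ∀ i j, i ≠ j → Disjoint (T i) (T j))
    (hteeth : ∀ i, ((T i) ∩ H).Nonempty ∧ ((T i) \ H).Nonempty)
    (hviol : cutVal x H + ∑ i, cutVal x (T i) < 3 * (t : ℝ) + 1)
    (i₀ : Fin t) (a b : V)
    (ha : a ∈ (T i₀) ∩ H) (hb : b ∈ (T i₀) \ H)
    (hab : x a b = 1 / 2)
    (honly : ∀ a' ∈ (T i₀) ∩ H, ∀ b' ∈ (T i₀) \ H, ¬(a' = a ∧ b' = b) → x a' b' = 0) :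
    (∀ tr ∈ 𝒯, a ∈ tr → b ∈ tr → ∀ c ∈ tr, c ≠ a → c ≠ b → c ∉ T i₀) ∧
    1 / 2 ≤ cutVal x H - ∑ i, eVal x ((T i) ∩ H) ((T i) \ H) := by
  have hx0 : ∀ i j, 0 ≤ x i j := by
    intro i j; rcases hval i j with h | h | h <;> rw [h] <;> norm_num
  obtain ⟨haT, haH⟩ := Finset.mem_inter.mp ha
  obtain ⟨hbT, hbH⟩ := Finset.mem_sdiff.mp hb
  have hne : a ≠ b := fun h => hbH (h ▸ haH)
  obtain ⟨hcard3, hhalf, huniq⟩ := htri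
  have part1 : ∀ tr ∈ 𝒯, a ∈ tr → b ∈ tr → ∀ c ∈ tr, c ≠ a → c ≠ b → c ∉ T i₀ := by
    intro tr htr hatr hbtr c hctr hca hcb hcT
    by_cases hcH : c ∈ H
    · have h1 : x c b = 1 / 2 := hhalf tr htr c hctr b hbtr hcb
      have h2 : x c b = 0 := honly c (Finset.mem_inter.mpr ⟨hcT, hcH⟩) b hb
        (fun h => hca h.1)
      rw [h1] at h2; norm_num at h2
    · have h1 : x a c = 1 / 2 := hhalf tr htr a hatr c hctr (Ne.symm hca)
      have h2 : x a c = 0 := honly a ha c (Finset.mem_sdiff.mpr ⟨hcT, hcH⟩)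
        (fun h => hcb h.2)
      rw [h1] at h2; norm_num at h2
  refine ⟨part1, ?_⟩
  obtain ⟨tr, ⟨htr, hatr, hbtr⟩, -⟩ := huniq a b hne hab
  have hsub2 : ({a, b} : Finset V) ⊆ tr := by
    intro z hz; rcases Finset.mem_insert.mp hz with rfl | hz
    · exact hatr
    · exact (Finset.mem_singleton.mp hz) ▸ hbtr
  have hc1 : (tr \ {a, b}).Nonempty := by
    rw [← Finset.card_pos, Finset.card_sdiff_of_subset hsub2, hcard3 tr htr,
      Finset.card_insert_of_notMem (by simpa using hne), Finset.card_singleton]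
    norm_num
  obtain ⟨c, hc⟩ := hc1
  obtain ⟨hctr, hcab⟩ := Finset.mem_sdiff.mp hc
  have hca : c ≠ a := fun h => hcab (by simp [h])
  have hcb : c ≠ b := fun h => hcab (by simp [h])
  have hcT : c ∉ T i₀ := part1 tr htr hatr hbtr c hctr hca hcb
  obtain ⟨u, v, huH, hvH, huv, hunot⟩ :
      ∃ u v, u ∈ H ∧ v ∉ H ∧ x u v = 1 / 2 ∧
        ∀ i, (u, v) ∉ (T i ∩ H) ×ˢ (T i \ H) := by
    by_cases hcH : c ∈ H
    · refine ⟨c, b, hcH, hbH, hhalf tr htr c hctr b hbtr hcb, ?_⟩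
      intro i hi
      obtain ⟨hu, hv⟩ := Finset.mem_product.mp hi
      have hbi : b ∈ T i := (Finset.mem_sdiff.mp hv).1
      have hci : c ∈ T i := (Finset.mem_inter.mp hu).1
      by_cases h : i = i₀
      · exact hcT (h ▸ hci)
      · exact (Finset.disjoint_left.mp (hdisj i i₀ h) hbi) hbT
    · refine ⟨a, c, haH, hcH, hhalf tr htr a hatr c hctr (Ne.symm hca), ?_⟩
      intro i hi
      obtain ⟨hu, hv⟩ := Finset.mem_product.mp hi
      have hai : a ∈ T i := (Finset.mem_inter.mp hu).1
      have hci : c ∈ T i := (Finset.mem_sdiff.mp hv).1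
      by_cases h : i = i₀
      · exact hcT (h ▸ hci)
      · exact (Finset.disjoint_left.mp (hdisj i i₀ h) hai) haT
  have hmemS : (u, v) ∈ H ×ˢ Hᶜ :=
    Finset.mem_product.mpr ⟨huH, Finset.mem_compl.mpr hvH⟩
  have hcut : cutVal x H = ∑ p ∈ H ×ˢ Hᶜ, x p.1 p.2 := by
    rw [cutVal, Finset.sum_product]
  have hdisjP : (↑(Finset.univ : Finset (Fin t)) : Set (Fin t)).PairwiseDisjoint
      (fun i => (T i ∩ H) ×ˢ (T i \ H)) := by
    intro i _ j _ hij
    refine Finset.disjoint_left.mpr ?_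
    intro p hp hp'
    have h1 := (Finset.mem_inter.mp (Finset.mem_product.mp hp).1).1
    have h2 := (Finset.mem_inter.mp (Finset.mem_product.mp hp').1).1
    exact (Finset.disjoint_left.mp (hdisj i j hij) h1) h2
  have hsum : ∑ i, eVal x (T i ∩ H) (T i \ H)
      = ∑ p ∈ Finset.univ.biUnion (fun i => (T i ∩ H) ×ˢ (T i \ H)), x p.1 p.2 := by
    rw [Finset.sum_biUnion hdisjP]
    exact Finset.sum_congr rfl (fun i _ => by rw [eVal, Finset.sum_product])
  have hsubset : Finset.univ.biUnion (fun i => (T i ∩ H) ×ˢ (T i \ H))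
      ⊆ (H ×ˢ Hᶜ).erase (u, v) := by
    intro p hp
    obtain ⟨i, -, hpi⟩ := Finset.mem_biUnion.mp hp
    obtain ⟨h1, h2⟩ := Finset.mem_product.mp hpi
    refine Finset.mem_erase.mpr ⟨?_, Finset.mem_product.mpr
      ⟨(Finset.mem_inter.mp h1).2, Finset.mem_compl.mpr (Finset.mem_sdiff.mp h2).2⟩⟩
    intro h; exact hunot i (h ▸ hpi)
  have hle : ∑ i, eVal x (T i ∩ H) (T i \ H)
      ≤ ∑ p ∈ (H ×ˢ Hᶜ).erase (u, v), x p.1 p.2 := by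
    rw [hsum]
    exact Finset.sum_le_sum_of_subset_of_nonneg hsubset (fun p _ _ => hx0 p.1 p.2)
  have hkey : ∑ p ∈ (H ×ˢ Hᶜ).erase (u, v), x p.1 p.2 + x u v = cutVal x H := by
    rw [hcut]; exact Finset.sum_erase_add _ _ hmemS
  linarith
end

section
/- Let x be a feasible half-integral Held–Karp solution whose weight-1/2 edges decompose into edge-disjoint triangles. If H, T₁,…,T_t is a comb violated by x with x(δ(Tᵢ)) = 2 for all i and x(δ*(H)) = 1/2, then a contradiction follows; i.e., x(δ*(H)) cannot equal 1/2 when all teeth have boundary weight 2. -/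
open Finset

variable {V : Type*} [Fintype V] [DecidableEq V]

lemma cutVal_int (x : V → V → ℝ)
    (hval : ∀ i j, x i j = 0 ∨ x i j = 1 / 2 ∨ x i j = 1)
    (𝒯 : Finset (Finset V)) (htri : TriDecomp x 𝒯) (S : Finset V) :
    ∃ n : ℤ, cutVal x S = n := by
  classical
  obtain ⟨h3, hhalf, huniq⟩ := htri
  have hprod : cutVal x S = ∑ p ∈ S ×ˢ Sᶜ, x p.1 p.2 := by
    rw [cutVal, Finset.sum_product]
  set P := (S ×ˢ Sᶜ).filter (fun p => x p.1 p.2 = 1/2) with hP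
  set Q := (S ×ˢ Sᶜ).filter (fun p => ¬ (x p.1 p.2 = 1/2)) with hQ
  have hsplit : cutVal x S = (∑ p ∈ P, x p.1 p.2) + ∑ p ∈ Q, x p.1 p.2 := by
    rw [hprod, hP, hQ, Finset.sum_filter_add_sum_filter_not]
  -- Q part is an integer
  have hQint : ∑ p ∈ Q, x p.1 p.2 = ((Q.filter (fun p => x p.1 p.2 = 1)).card : ℝ) := by
    rw [Finset.card_filter]
    push_cast
    refine Finset.sum_congr rfl (fun p hp => ?_)
    rcases hval p.1 p.2 with h | h | h
    · simp [h]
    · exact absurd h (Finset.mem_filter.mp hp).2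
    · simp [h]
  -- P part: card is even
  let g : V × V → Finset V := fun p =>
    if h : ∃ tr, tr ∈ 𝒯 ∧ p.1 ∈ tr ∧ p.2 ∈ tr then h.choose else ∅
  have hgP : ∀ p ∈ P, g p ∈ 𝒯 ∧ p.1 ∈ g p ∧ p.2 ∈ g p := by
    intro p hp
    rw [hP, Finset.mem_filter, Finset.mem_product] at hp
    have hne : p.1 ≠ p.2 := by
      intro heq
      exact (Finset.mem_compl.mp hp.1.2) (heq ▸ hp.1.1)
    have h := huniq p.1 p.2 hne hp.2
    have hex : ∃ tr, tr ∈ 𝒯 ∧ p.1 ∈ tr ∧ p.2 ∈ tr := h.exists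
    simp only [g, dif_pos hex]
    exact hex.choose_spec
  have hcard : P.card = ∑ tr ∈ 𝒯, (P.filter (fun p => g p = tr)).card := by
    exact Finset.card_eq_sum_card_fiberwise (fun p hp => (hgP p hp).1)
  have heven : ∀ tr ∈ 𝒯, Even (P.filter (fun p => g p = tr)).card := by
    intro tr htr
    have hfib : P.filter (fun p => g p = tr) = (tr ∩ S) ×ˢ (tr ∩ Sᶜ) := by
      ext p
      simp only [Finset.mem_filter, Finset.mem_product, Finset.mem_inter]
      constructor
      · rintro ⟨hp, hg⟩
        obtain ⟨hg𝒯, h1, h2⟩ := hgP p hp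
        rw [hP, Finset.mem_filter, Finset.mem_product] at hp
        exact ⟨⟨hg ▸ h1, hp.1.1⟩, hg ▸ h2, hp.1.2⟩
      · rintro ⟨⟨h1t, h1S⟩, h2t, h2S⟩
        have hne : p.1 ≠ p.2 := by
          intro heq; exact (Finset.mem_compl.mp h2S) (heq ▸ h1S)
        have hx : x p.1 p.2 = 1/2 := hhalf tr htr p.1 h1t p.2 h2t hne
        have hpP : p ∈ P := by
          rw [hP, Finset.mem_filter, Finset.mem_product]
          exact ⟨⟨h1S, h2S⟩, hx⟩
        refine ⟨hpP, ?_⟩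
        obtain ⟨hg𝒯, hg1, hg2⟩ := hgP p hpP
        have h := huniq p.1 p.2 hne hx
        obtain ⟨u, hu, hun⟩ := h
        rw [hun (g p) ⟨hg𝒯, hg1, hg2⟩, hun tr ⟨htr, h1t, h2t⟩]
      
    rw [hfib, Finset.card_product]
    have hsum : (tr ∩ S).card + (tr ∩ Sᶜ).card = 3 := by
      rw [← h3 tr htr]
      have : tr ∩ Sᶜ = tr \ S := by
        ext a; simp [Finset.mem_sdiff, Finset.mem_inter]
      rw [this, Finset.card_inter_add_card_sdiff]
    rcases Nat.even_or_odd (tr ∩ S).card with he | ho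
    · exact he.mul_right _
    · have : Even (tr ∩ Sᶜ).card := by
        rw [Nat.even_iff]; rw [Nat.odd_iff] at ho; omega
      exact this.mul_left _
  have hPeven : Even P.card := by
    rw [hcard]
    exact Finset.even_sum _ (fun tr htr => heven tr htr)
  obtain ⟨m, hm⟩ := hPeven
  have hPsum : ∑ p ∈ P, x p.1 p.2 = (m : ℝ) := by
    have : ∀ p ∈ P, x p.1 p.2 = 1/2 := fun p hp => (Finset.mem_filter.mp hp).2
    rw [Finset.sum_congr rfl this, Finset.sum_const, hm]
    push_cast; ring
  exact ⟨m + (Q.filter (fun p => x p.1 p.2 = 1)).card, by rw [hsplit, hPsum, hQint]; push_cast; ring⟩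

lemma cut_split (x : V → V → ℝ) (hsym : ∀ i j, x i j = x j i)
    (A B : Finset V) (hAB : Disjoint A B) :
    cutVal x A + cutVal x B = cutVal x (A ∪ B) + 2 * eVal x A B := by
  classical
  have hAc : Aᶜ = B ∪ (A ∪ B)ᶜ := by
    ext j
    simp only [Finset.mem_compl, Finset.mem_union]
    constructor
    · intro hj
      by_cases hb : j ∈ B
      · exact Or.inl hb
      · exact Or.inr (by tauto)
    · rintro (hb | h)
      · exact fun ha => Finset.disjoint_left.mp hAB ha hb
      · tauto
  have hBc : Bᶜ = A ∪ (A ∪ B)ᶜ := by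
    ext j
    simp only [Finset.mem_compl, Finset.mem_union]
    constructor
    · intro hj
      by_cases ha : j ∈ A
      · exact Or.inl ha
      · exact Or.inr (by tauto)
    · rintro (ha | h)
      · exact fun hb => Finset.disjoint_right.mp hAB hb ha
      · tauto
  have hdA : Disjoint B (A ∪ B)ᶜ := by
    exact Finset.disjoint_left.mpr fun a ha hc => (Finset.mem_compl.mp hc) (Finset.mem_union_right _ ha)
  have hdB : Disjoint A (A ∪ B)ᶜ := by
    exact Finset.disjoint_left.mpr fun a ha hc => (Finset.mem_compl.mp hc) (Finset.mem_union_left _ ha)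
  have hcA : cutVal x A = eVal x A B + eVal x A (A ∪ B)ᶜ := by
    rw [cutVal, eVal, eVal, ← Finset.sum_add_distrib]
    refine Finset.sum_congr rfl fun i _ => ?_
    rw [hAc, Finset.sum_union hdA]
  have hcB : cutVal x B = eVal x B A + eVal x B (A ∪ B)ᶜ := by
    rw [cutVal, eVal, eVal, ← Finset.sum_add_distrib]
    refine Finset.sum_congr rfl fun i _ => ?_
    rw [hBc, Finset.sum_union hdB]
  have hcU : cutVal x (A ∪ B) = eVal x A (A ∪ B)ᶜ + eVal x B (A ∪ B)ᶜ := by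
    rw [cutVal, eVal, eVal, ← Finset.sum_union hAB]
  have hsymE : eVal x B A = eVal x A B := by
    rw [eVal, eVal, Finset.sum_comm]
    exact Finset.sum_congr rfl fun i _ => Finset.sum_congr rfl fun j _ => hsym _ _
  rw [hcA, hcB, hcU, hsymE]; ring

/-- In a violated comb all of whose teeth have boundary weight 2, the weight of edges
leaving the handle that are not inside a tooth cannot be 1/2. -/
theorem deltaStar_ne_half
    (x : V → V → ℝ)
    (hsym : ∀ i j, x i j = x j i)
    (hdiag : ∀ i, x i i = 0)
    (hval : ∀ i j, x i j = 0 ∨ x i j = 1 / 2 ∨ x i j = 1)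
    (hdeg : ∀ i : V, ∑ j, x i j = 2)
    (hsub : ∀ S : Finset V, S.Nonempty → S ≠ Finset.univ → 2 ≤ cutVal x S)
    (𝒯 : Finset (Finset V)) (htri : TriDecomp x 𝒯)
    (H : Finset V) (t : ℕ) (ht : Odd t) (T : Fin t → Finset V)
    (hdisj : ∀ i j, i ≠ j → Disjoint (T i) (T j))
    (hteeth : ∀ i, ((T i) ∩ H).Nonempty ∧ ((T i) \ H).Nonempty)
    (hviol : cutVal x H + ∑ i, cutVal x (T i) < 3 * (t : ℝ) + 1)
    (hT2 : ∀ i, cutVal x (T i) = 2) :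
    cutVal x H - ∑ i, eVal x ((T i) ∩ H) ((T i) \ H) ≠ 1 / 2 := by
    classical
  intro heq
  set A : Fin t → Finset V := fun i => T i ∩ H with hA
  set B : Fin t → Finset V := fun i => T i \ H with hB
  have he1 : ∀ i, 1 ≤ eVal x (A i) (B i) := by
    intro i
    have hABd : Disjoint (A i) (B i) := by
      exact Finset.disjoint_left.mpr fun a ha hb =>
        (Finset.mem_sdiff.mp hb).2 (Finset.mem_inter.mp ha).2
    have hUn : A i ∪ B i = T i := by
      ext a
      simp only [hA, hB, Finset.mem_union, Finset.mem_inter, Finset.mem_sdiff]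
      tauto
    have hAne : (A i).Nonempty := (hteeth i).1
    have hBne : (B i).Nonempty := (hteeth i).2
    have hAnu : A i ≠ Finset.univ := by
      intro h
      obtain ⟨b, hb⟩ := hBne
      have : b ∈ A i := h ▸ Finset.mem_univ b
      exact Finset.disjoint_left.mp hABd this hb
    have hBnu : B i ≠ Finset.univ := by
      intro h
      obtain ⟨a, ha⟩ := hAne
      have : a ∈ B i := h ▸ Finset.mem_univ a
      exact Finset.disjoint_left.mp hABd ha this
    have h1 := hsub (A i) hAne hAnu
    have h2 := hsub (B i) hBne hBnu
    have hs := cut_split x hsym (A i) (B i) hABd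
    rw [hUn, hT2 i] at hs
    linarith
  have hsumt : (t : ℝ) ≤ ∑ i, eVal x (A i) (B i) := by
    calc (t : ℝ) = ∑ _i : Fin t, (1 : ℝ) := by simp
    _ ≤ ∑ i, eVal x (A i) (B i) := Finset.sum_le_sum fun i _ => he1 i
  have hHlt : cutVal x H < (t : ℝ) + 1 := by
    have : ∑ i, cutVal x (T i) = 2 * t := by
      rw [Finset.sum_congr rfl fun i _ => hT2 i]; simp; ring
    rw [this] at hviol
    linarith
  obtain ⟨n, hn⟩ := cutVal_int x hval 𝒯 htri H
  have h1 : (t : ℝ) + 1/2 ≤ (n : ℝ) := by rw [← hn]; linarith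
  have h2 : (n : ℝ) < (t : ℝ) + 1 := by rw [← hn]; exact hHlt
  have h3 : (t : ℤ) < n := by exact_mod_cast lt_of_lt_of_le (by linarith : (t:ℝ) < (t:ℝ)+1/2) h1
  have h4 : (n : ℝ) ≥ (t : ℝ) + 1 := by exact_mod_cast (by omega : (t : ℤ) + 1 ≤ n)
  linarith
end

section
/- Let x assign weight 1/2 to all three edges of a triangle P = {a,b,c} inside a feasible half-integral Held–Karp solution, so that x(δ(P)) = 3 and each vertex of P has x-weight exactly 1 leaving P. If T ⊇ P is any set with x(δ(T)) = 2, then the support of x restricted to T contains a path between two distinct vertices of P that avoids all edges within P. -/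
open Finset

variable {V : Type*} [Fintype V] [DecidableEq V]

/-- Auxiliary graph: support edges inside `T` with at least one endpoint outside `P`. -/
def auxG (x : V → V → ℝ) (T P : Finset V) : SimpleGraph V where
  Adj i j := (support x).Adj i j ∧ i ∈ T ∧ j ∈ T ∧ (i ∉ P ∨ j ∉ P)
  symm := ⟨fun i j h => ⟨h.1.symm, h.2.2.1, h.2.1, h.2.2.2.symm⟩⟩
  loopless := ⟨fun i h => h.1.1 rfl⟩

lemma auxG_le (x : V → V → ℝ) (T P : Finset V) : auxG x T P ≤ support x :=
  fun _ _ h => h.1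

lemma auxG_walk_support {x : V → V → ℝ} {T P : Finset V} {i j : V}
    (p : (auxG x T P).Walk i j) (hi : i ∈ T) : ∀ w ∈ p.support, w ∈ T := by
  induction p with
  | nil => intro w hw; simp at hw; subst hw; exact hi
  | cons h q ih =>
      intro w hw
      rw [SimpleGraph.Walk.support_cons] at hw
      rcases List.mem_cons.1 hw with rfl | hw
      · exact h.2.1
      · exact ih h.2.2.1 w hw

lemma auxG_walk_edges {x : V → V → ℝ} {T P : Finset V} {i j : V}
    (p : (auxG x T P).Walk i j) : ∀ e ∈ p.edges, ∃ w ∈ e, w ∉ P := by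
  induction p with
  | nil => intro e he; simp at he
  | cons h q ih =>
      intro e he
      rw [SimpleGraph.Walk.edges_cons] at he
      rcases List.mem_cons.1 he with rfl | he
      · rcases h.2.2.2 with hp | hp
        · exact ⟨_, Sym2.mem_mk_left _ _, hp⟩
        · exact ⟨_, Sym2.mem_mk_right _ _, hp⟩
      · exact ih e he

lemma detour_of_reachable {x : V → V → ℝ} {T P : Finset V} {u v : V}
    (hT : u ∈ T) (hr : (auxG x T P).Reachable u v) :
    ∃ p : (support x).Walk u v, p.IsPath ∧
      (∀ w ∈ p.support, w ∈ T) ∧ (∀ e ∈ p.edges, ∃ w ∈ e, w ∉ P) := by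
  obtain ⟨q⟩ := hr
  have hq : ∀ e ∈ q.edges, e ∈ (support x).edgeSet := fun e he =>
    SimpleGraph.edgeSet_mono (auxG_le x T P) (q.edges_subset_edgeSet he)
  refine ⟨(q.transfer (support x) hq).bypass, SimpleGraph.Walk.bypass_isPath _, ?_, ?_⟩
  · intro w hw
    have := SimpleGraph.Walk.support_bypass_subset _ hw
    rw [SimpleGraph.Walk.support_transfer] at this
    exact auxG_walk_support q hT w this
  · intro e he
    have := SimpleGraph.Walk.edges_bypass_subset _ he
    rw [SimpleGraph.Walk.edges_transfer] at this
    exact auxG_walk_edges q e this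

/-- Gadget specialization of the cycle lemma: a half-weight triangle `P = {a,b,c}` inside a
set `T` with `x(δ(T)) = 2` forces a path in the support of `x`, inside `T`, between two
vertices of `P` avoiding the edges within `P`. -/
theorem triangle_detour
    (x : V → V → ℝ)
    (hsym : ∀ i j, x i j = x j i)
    (hdiag : ∀ i, x i i = 0)
    (hval : ∀ i j, x i j = 0 ∨ x i j = 1 / 2 ∨ x i j = 1)
    (hdeg : ∀ i : V, ∑ j, x i j = 2)
    (hsub : ∀ A : Finset V, A.Nonempty → A ≠ Finset.univ → 2 ≤ cutVal x A)
    (a b c : V) (hab : a ≠ b) (hac : a ≠ c) (hbc : b ≠ c)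
    (hxab : x a b = 1 / 2) (hxbc : x b c = 1 / 2) (hxac : x a c = 1 / 2)
    (T : Finset V) (hPT : ({a, b, c} : Finset V) ⊆ T)
    (hcutP : cutVal x ({a, b, c} : Finset V) = 3)
    (hleave : ∀ u ∈ ({a, b, c} : Finset V),
      eVal x {u} (Finset.univ \ ({a, b, c} : Finset V)) = 1)
    (hcutT : cutVal x T = 2) :
    ∃ u ∈ ({a, b, c} : Finset V), ∃ v ∈ ({a, b, c} : Finset V), u ≠ v ∧
      ∃ p : (support x).Walk u v, p.IsPath ∧
        (∀ w ∈ p.support, w ∈ T) ∧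
        (∀ e ∈ p.edges, ∃ w ∈ e, w ∉ ({a, b, c} : Finset V)) := by
  classical
  set P : Finset V := {a, b, c} with hP
  by_contra hcon
  -- nonnegativity
  have hpos : ∀ i j, 0 ≤ x i j := by
    intro i j; rcases hval i j with h | h | h <;> rw [h] <;> norm_num
  -- key: no two distinct vertices of P are auxG-reachable
  have key : ∀ u ∈ P, ∀ v ∈ P, (auxG x T P).Reachable u v → u = v := by
    intro u hu v hv hr
    by_contra hne
    obtain ⟨p, hp1, hp2, hp3⟩ := detour_of_reachable (hPT hu) hr
    exact hcon ⟨u, hu, v, hv, hne, p, hp1, hp2, hp3⟩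
  -- reachable sets
  set R : V → Finset V := fun u => (T \ P).filter (fun w => (auxG x T P).Reachable u w)
    with hR
  set S : V → Finset V := fun u => insert u (R u) with hS
  have hRsub : ∀ u, R u ⊆ T \ P := fun u => filter_subset _ _
  have hSsubT : ∀ u ∈ P, S u ⊆ T := by
    intro u hu w hw
    rcases mem_insert.1 hw with rfl | hw
    · exact hPT hu
    · exact (mem_sdiff.1 (hRsub u hw)).1
  have hreachS : ∀ u, ∀ i ∈ S u, (auxG x T P).Reachable u i := by
    intro u i hi
    rcases mem_insert.1 hi with rfl | hi
    · exact SimpleGraph.Reachable.refl _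
    · exact (mem_filter.1 hi).2
  -- adjacency from nonzero weight
  have hadj : ∀ i j, i ∈ T → j ∈ T → (i ∉ P ∨ j ∉ P) → x i j ≠ 0 →
      (auxG x T P).Adj i j := by
    intro i j hi hj hij hx
    have hne : i ≠ j := by rintro rfl; exact hx (hdiag i)
    exact ⟨⟨hne, Or.inl (lt_of_le_of_ne (hpos i j) (Ne.symm hx))⟩, hi, hj, hij⟩
  -- closure of S u
  have hclosed : ∀ u ∈ P, ∀ i ∈ S u, ∀ j ∈ T, j ∉ S u → (i ∉ P ∨ j ∉ P) →
      x i j = 0 := by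
    intro u hu i hi j hj hjS hij
    by_contra hx
    have hadj' := hadj i j ((hSsubT u hu) hi) hj hij hx
    have hrj : (auxG x T P).Reachable u j := (hreachS u i hi).trans ⟨hadj'.toWalk⟩
    by_cases hjP : j ∈ P
    · have := key u hu j hjP hrj
      exact hjS (this ▸ mem_insert_self u (R u))
    · exact hjS (mem_insert_of_mem (mem_filter.2 ⟨mem_sdiff.2 ⟨hj, hjP⟩, hrj⟩))
  -- each vertex of R u is outside P
  have hRnotP : ∀ u, ∀ i ∈ R u, i ∉ P := fun u i hi => (mem_sdiff.1 (hRsub u hi)).2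
  -- main estimate: 1 <= eVal x (S u) Tᶜ for u ∈ P
  have hTne : T ≠ univ := by
    intro h
    rw [cutVal, h] at hcutT
    simp at hcutT
  have hmain : ∀ u ∈ P, (∑ j ∈ P \ {u}, x u j) = 1 → 1 ≤ eVal x (S u) Tᶜ := by
    intro u hu hPu
    have hSne : (S u).Nonempty := ⟨u, mem_insert_self _ _⟩
    have hSneU : S u ≠ univ := by
      intro h
      exact hTne (univ_subset_iff.1 (h ▸ hSsubT u hu))
    have hsubS := hsub (S u) hSne hSneU
    have hcompl : (S u)ᶜ = (T \ S u) ∪ Tᶜ := by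
      ext j
      simp only [mem_compl, mem_union, mem_sdiff]
      constructor
      · intro h
        by_cases hjT : j ∈ T
        · exact Or.inl ⟨hjT, h⟩
        · exact Or.inr hjT
      · rintro (⟨_, h⟩ | h) hS
        · exact h hS
        · exact h (hSsubT u hu hS)
    have hdisj : Disjoint (T \ S u) Tᶜ := by
      rw [Finset.disjoint_left]
      intro z h1 h2
      exact (mem_compl.1 h2) (mem_sdiff.1 h1).1
    have hcv : cutVal x (S u) = eVal x (S u) (T \ S u) + eVal x (S u) Tᶜ := by
      rw [cutVal, eVal, eVal, ← Finset.sum_add_distrib]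
      refine Finset.sum_congr rfl fun i _ => ?_
      rw [hcompl, Finset.sum_union hdisj]
    have hT1 : eVal x (S u) (T \ S u) = 1 := by
      rw [eVal]
      have hrow : ∀ i ∈ S u, (∑ j ∈ T \ S u, x i j) =
          if i = u then 1 else 0 := by
        intro i hi
        by_cases hiu : i = u
        · subst hiu
          simp only [if_pos rfl]
          rw [← hPu]
          have hsplit : ∀ j ∈ T \ S i, j ∉ P \ {i} → x i j = 0 := by
            intro j hj hjP
            rcases mem_sdiff.1 hj with ⟨hjT, hjS⟩
            have hjP' : j ∉ P := by
              intro h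
              apply hjP
              refine mem_sdiff.2 ⟨h, ?_⟩
              simp only [mem_singleton]
              rintro rfl
              exact hjS (mem_insert_self _ _)
            exact hclosed i hu i (mem_insert_self _ _) j hjT hjS (Or.inr hjP')
          have hPsub : P \ {i} ⊆ T \ S i := by
            intro j hj
            rcases mem_sdiff.1 hj with ⟨hjP, hji⟩
            refine mem_sdiff.2 ⟨hPT hjP, ?_⟩
            intro hjS
            rcases mem_insert.1 hjS with rfl | hjR
            · exact (hji (mem_singleton_self _)).elim
            · exact hRnotP i j hjR hjP
          exact (Finset.sum_subset hPsub hsplit).symm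
        · simp only [if_neg hiu]
          refine Finset.sum_eq_zero fun j hj => ?_
          rcases mem_sdiff.1 hj with ⟨hjT, hjS⟩
          have hiR : i ∈ R u := by
            rcases mem_insert.1 hi with rfl | h
            · exact absurd rfl hiu
            · exact h
          exact hclosed u hu i hi j hjT hjS (Or.inl (hRnotP u i hiR))
      rw [Finset.sum_congr rfl hrow, Finset.sum_ite_eq' (S u) u (fun _ => (1:ℝ))]
      have huS : u ∈ S u := mem_insert_self _ _
      rw [if_pos huS]
    rw [hcv, hT1] at hsubS
    linarith
  -- memberships
  have ha : a ∈ P := by rw [hP]; exact mem_insert_self _ _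
  have hb : b ∈ P := by rw [hP]; simp
  have hc : c ∈ P := by rw [hP]; simp
  -- the three row sums
  have hPa : P \ {a} = {b, c} := by
    rw [hP]; ext z
    simp only [mem_sdiff, mem_insert, mem_singleton]
    constructor
    · rintro ⟨(rfl | rfl | rfl), hz⟩
      · exact absurd rfl hz
      · exact Or.inl rfl
      · exact Or.inr rfl
    · rintro (rfl | rfl)
      · exact ⟨Or.inr (Or.inl rfl), Ne.symm hab⟩
      · exact ⟨Or.inr (Or.inr rfl), Ne.symm hac⟩
  have hPb : P \ {b} = {a, c} := by
    rw [hP]; ext z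
    simp only [mem_sdiff, mem_insert, mem_singleton]
    constructor
    · rintro ⟨(rfl | rfl | rfl), hz⟩
      · exact Or.inl rfl
      · exact absurd rfl hz
      · exact Or.inr rfl
    · rintro (rfl | rfl)
      · exact ⟨Or.inl rfl, hab⟩
      · exact ⟨Or.inr (Or.inr rfl), Ne.symm hbc⟩
  have hPc : P \ {c} = {a, b} := by
    rw [hP]; ext z
    simp only [mem_sdiff, mem_insert, mem_singleton]
    constructor
    · rintro ⟨(rfl | rfl | rfl), hz⟩
      · exact Or.inl rfl
      · exact Or.inr rfl
      · exact absurd rfl hz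
    · rintro (rfl | rfl)
      · exact ⟨Or.inl rfl, hac⟩
      · exact ⟨Or.inr (Or.inl rfl), hbc⟩
  have hsa : (∑ j ∈ P \ {a}, x a j) = 1 := by
    rw [hPa, Finset.sum_insert (by simpa using hbc), Finset.sum_singleton, hxab, hxac]
    norm_num
  have hsb : (∑ j ∈ P \ {b}, x b j) = 1 := by
    rw [hPb, Finset.sum_insert (by simpa using hac), Finset.sum_singleton,
      hsym b a, hxab, hxbc]
    norm_num
  have hsc : (∑ j ∈ P \ {c}, x c j) = 1 := by
    rw [hPc, Finset.sum_insert (by simpa using hab), Finset.sum_singleton,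
      hsym c a, hsym c b, hxac, hxbc]
    norm_num
  have h1a := hmain a ha hsa
  have h1b := hmain b hb hsb
  have h1c := hmain c hc hsc
  -- pairwise disjointness of the sets S
  have hdisjS : ∀ u ∈ P, ∀ v ∈ P, u ≠ v → Disjoint (S u) (S v) := by
    intro u hu v hv huv
    rw [Finset.disjoint_left]
    intro z hzu hzv
    rcases mem_insert.1 hzu with rfl | hzu <;> rcases mem_insert.1 hzv with h | hzv
    · exact huv h
    · exact hRnotP v z hzv hu
    · subst h; exact hRnotP u z hzu hv
    · exact huv (key u hu v hv (((mem_filter.1 hzu).2).trans ((mem_filter.1 hzv).2).symm))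
  have hdab := hdisjS a ha b hb hab
  have hdac := hdisjS a ha c hc hac
  have hdbc := hdisjS b hb c hc hbc
  -- sum over the union
  have hUsub : S a ∪ S b ∪ S c ⊆ T := by
    intro z hz
    rcases mem_union.1 hz with hz | hz
    · rcases mem_union.1 hz with hz | hz
      · exact hSsubT a ha hz
      · exact hSsubT b hb hz
    · exact hSsubT c hc hz
  have hsumU : eVal x (S a ∪ S b ∪ S c) Tᶜ =
      eVal x (S a) Tᶜ + eVal x (S b) Tᶜ + eVal x (S c) Tᶜ := by
    rw [eVal, eVal, eVal, eVal,
      Finset.sum_union (Finset.disjoint_union_left.2 ⟨hdac, hdbc⟩),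
      Finset.sum_union hdab]
  have hle : eVal x (S a ∪ S b ∪ S c) Tᶜ ≤ eVal x T Tᶜ := by
    refine Finset.sum_le_sum_of_subset_of_nonneg hUsub fun i _ _ => ?_
    exact Finset.sum_nonneg fun j _ => hpos i j
  have hTeq : eVal x T Tᶜ = 2 := hcutT
  linarith
end
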